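/- arXiv:2510.05009 — 3 statements merged into one kernel-verified Lean document; each statement's English description precedes it below -/
import Mathlib

section
/- Maximum principle: Let q ∈ {0,…,n−1} and let ω be a nonempty, relatively compact open set in ℝⁿ. If u is real q-convex on ω and upper semicontinuous on the closure cl(ω), then max{u(x) : x ∈ cl(ω)} = max{u(x) : x ∈ ∂ω}. -/
open Metric Set Filter

noncomputable section

open scoped RealInnerProductSpace


/-- An upper semicontinuous `EReal`-valued function on a nonempty compact set attains
its maximum. -/
lemma usc_exists_max {E : Type*} [TopologicalSpace E] {s : Set E} (hs : IsCompact s)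
    (hne : s.Nonempty) {u : E → EReal} (hu : UpperSemicontinuousOn u s) :
    ∃ z ∈ s, ∀ y ∈ s, u y ≤ u z := by
  by_contra h
  push_neg at h
  choose y hy hylt using h
  have hb : ∀ x (hx : x ∈ s), ∃ b : EReal, u x < b ∧ b < u (y x hx) :=
    fun x hx => exists_between (hylt x hx)
  choose b hb1 hb2 using hb
  have hU : ∀ x (hx : x ∈ s), ∃ V : Set E, IsOpen V ∧ x ∈ V ∧ ∀ z ∈ V ∩ s, u z < b x hx := by
    intro x hx
    have := hu x hx (b x hx) (hb1 x hx)
    rw [eventually_nhdsWithin_iff] at this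
    obtain ⟨V, hV1, hV2, hV3⟩ := eventually_nhds_iff.1 this
    exact ⟨V, hV2, hV3, fun z hz => hV1 z hz.1 hz.2⟩
  choose V hVopen hVmem hVlt using hU
  obtain ⟨t, ht⟩ := hs.elim_nhds_subcover' V (fun x hx => (hVopen x hx).mem_nhds (hVmem x hx))
  have htne : t.Nonempty := by
    rcases hne with ⟨x, hx⟩
    rcases mem_iUnion₂.1 (ht hx) with ⟨i, hi, _⟩
    exact ⟨i, hi⟩
  obtain ⟨x0, hx0t, hx0max⟩ := t.exists_max_image (fun x => b x x.2) htne
  have hymem : y x0 x0.2 ∈ s := hy _ _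
  rcases mem_iUnion₂.1 (ht hymem) with ⟨i, hit, hiV⟩
  have h1 : u (y x0 x0.2) < b i i.2 := hVlt i i.2 _ ⟨hiV, hymem⟩
  have h2 : b i i.2 ≤ b x0 x0.2 := hx0max i hit
  exact absurd (h1.trans_le h2) (not_lt.2 (hb2 x0 x0.2).le)

/-- Any submodule of a finite-dimensional space extends to one of any given larger finrank. -/
lemma exists_superset_finrank_eq {V : Type*} [AddCommGroup V] [Module ℝ V]
    [FiniteDimensional ℝ V] :
    ∀ (d : ℕ) (N : Submodule ℝ V) (k : ℕ), Module.finrank ℝ N + d = k →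
      k ≤ Module.finrank ℝ V → ∃ W : Submodule ℝ V, N ≤ W ∧ Module.finrank ℝ W = k := by
  intro d
  induction d with
  | zero => exact fun N k h _ => ⟨N, le_rfl, by omega⟩
  | succ d ih =>
    intro N k h hk
    have hlt : Module.finrank ℝ N < Module.finrank ℝ V := by omega
    obtain ⟨m, hm⟩ := Submodule.exists_of_finrank_lt N hlt
    have hmN : m ∉ N := by simpa using hm 1 one_ne_zero
    have hm0 : m ≠ 0 := by
      rintro rfl; exact hmN N.zero_mem
    have hdisj : N ⊓ (ℝ ∙ m) = ⊥ := by
      rw [eq_bot_iff]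
      rintro x ⟨hxN, hxm⟩
      rcases Submodule.mem_span_singleton.1 hxm with ⟨r, rfl⟩
      rcases eq_or_ne r 0 with rfl | hr
      · simp
      · exact absurd hxN (hm r hr)
    have hfin : Module.finrank ℝ ↥(N ⊔ ℝ ∙ m) = Module.finrank ℝ N + 1 := by
      have := Submodule.finrank_sup_add_finrank_inf_eq N (ℝ ∙ m)
      rw [hdisj] at this
      simp only [finrank_bot, add_zero] at this
      rw [this, finrank_span_singleton hm0]
    obtain ⟨W, hW1, hW2⟩ := ih (N ⊔ ℝ ∙ m) k (by omega) hk
    exact ⟨W, le_trans le_sup_left hW1, hW2⟩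

/-- The affine barrier function `x ↦ α - μ ⟪e, x - x₀⟫`. -/
def affineBarrier {E : Type*} [NormedAddCommGroup E] [InnerProductSpace ℝ E]
    (e x0 : E) (α μ : ℝ) : E →ᵃ[ℝ] ℝ where
  toFun := fun x => α - μ * ⟪e, x - x0⟫
  linear := (-μ) • ((innerSL ℝ e : E →L[ℝ] ℝ) : E →ₗ[ℝ] ℝ)
  map_vadd' := by
    intro p v
    simp only [vadd_eq_add, LinearMap.smul_apply, LinearMap.coe_coe, innerSL_apply_apply,
      vadd_eq_add, smul_eq_mul]
    have : ⟪e, v + p - x0⟫ = ⟪e, v⟫ + ⟪e, p - x0⟫ := by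
      rw [add_sub_assoc, inner_add_right]
    rw [this]
    simp [innerSL_apply_apply]
    ring

@[simp] lemma affineBarrier_apply {E : Type*} [NormedAddCommGroup E] [InnerProductSpace ℝ E]
    (e x0 : E) (α μ : ℝ) (x : E) : affineBarrier e x0 α μ x = α - μ * ⟪e, x - x0⟫ := rfl

/-- An upper semicontinuous function `u : ω → [−∞,+∞)` (EReal-valued, never `⊤` on `ω`)
is *real q-convex* on `ω` if it satisfies the local maximum property with respect to
affine linear functions on real `(q+1)`-dimensional affine subspaces. -/
def RealQConvexOn {E : Type*} [NormedAddCommGroup E] [NormedSpace ℝ E]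
    (q : ℕ) (u : E → EReal) (ω : Set E) : Prop :=
  (∀ x ∈ ω, u x ≠ ⊤) ∧ UpperSemicontinuousOn u ω ∧
    ∀ P : AffineSubspace ℝ E, Module.finrank ℝ P.direction = q + 1 →
      ∀ (c : E) (r : ℝ), 0 < r → closure (Metric.ball c r) ⊆ ω →
        ∀ l : E →ᵃ[ℝ] ℝ,
          (∀ x ∈ Metric.sphere c r ∩ (P : Set E), u x ≤ (l x : EReal)) →
          ∀ x ∈ Metric.closedBall c r ∩ (P : Set E), u x ≤ (l x : EReal)

set_option maxHeartbeats 1000000 in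
/-- Maximum principle: if `u` is real q-convex on a nonempty relatively compact open set
`ω ⊆ ℝⁿ` and upper semicontinuous up to the closure of `ω`, then the maximum of `u` over
the closure of `ω` equals its maximum over the boundary of `ω`. -/
theorem realQConvexOn_maximum_principle {n q : ℕ} (hq : q < n)
    (ω : Set (EuclideanSpace ℝ (Fin n))) (hω : IsOpen ω) (hne : ω.Nonempty)
    (hbd : Bornology.IsBounded ω)
    (u : EuclideanSpace ℝ (Fin n) → EReal)
    (hu : RealQConvexOn q u ω)
    (husc : UpperSemicontinuousOn u (closure ω)) (htop : ∀ x ∈ closure ω, u x ≠ ⊤) :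
    sSup (u '' closure ω) = sSup (u '' frontier ω) := by
  obtain ⟨-, -, hu3⟩ := hu
  have hncl : (closure ω).Nonempty := hne.closure
  have hcomp : IsCompact (closure ω) := hbd.isCompact_closure
  obtain ⟨z, hz, hzmax⟩ := usc_exists_max hcomp hncl husc
  set S := sSup (u '' closure ω) with hSdef
  have hSz : S = u z :=
    le_antisymm (sSup_le (by rintro _ ⟨y, hy, rfl⟩; exact hzmax y hy)) (le_sSup ⟨z, hz, rfl⟩)
  have hfs : frontier ω ⊆ closure ω := frontier_subset_closure
  refine le_antisymm ?_ (sSup_le_sSup (image_mono hfs))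
  by_cases hKf : ∃ x ∈ frontier ω, S ≤ u x
  · obtain ⟨x, hx1, hx2⟩ := hKf
    exact hx2.trans (le_sSup ⟨x, hx1, rfl⟩)
  exfalso
  push_neg at hKf
  -- the set of maximizers
  set K : Set (EuclideanSpace ℝ (Fin n)) := {x | x ∈ closure ω ∧ S ≤ u x} with hKdef
  have hzK : z ∈ K := ⟨hz, hSz.le⟩
  have hKcl : K ⊆ closure ω := fun x hx => hx.1
  have hKsub : K ⊆ ω := by
    intro x hx
    by_contra hxω
    have hxf : x ∈ frontier ω := by
      rw [frontier_eq_closure_inter_closure]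
      exact ⟨hx.1, subset_closure hxω⟩
    exact absurd hx.2 (not_le.2 (hKf x hxf))
  have hKclosed : IsClosed K := by
    rw [← isOpen_compl_iff, isOpen_iff_mem_nhds]
    intro x hx
    by_cases hxcl : x ∈ closure ω
    · have hxlt : u x < S := by
        rcases not_and_or.1 hx with h | h
        · exact absurd hxcl h
        · exact not_le.1 h
      obtain ⟨b, hb1, hb2⟩ := exists_between hxlt
      have hev := husc x hxcl b hb1
      rw [eventually_nhdsWithin_iff] at hev
      filter_upwards [hev] with y hy hyK
      exact absurd (hyK.2.trans_lt (hy hyK.1)) (not_lt.2 hb2.le)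
    · filter_upwards [(isOpen_compl_iff.2 isClosed_closure).mem_nhds hxcl] with y hy
      exact fun hyK => hy hyK.1
  have hKcomp : IsCompact K := hcomp.of_isClosed_subset hKclosed hKcl
  have hSne_top : S ≠ ⊤ := hSz ▸ htop z hz
  -- a point outside ω
  obtain ⟨R0, hR0⟩ := hbd.subset_closedBall (0 : EuclideanSpace ℝ (Fin n))
  have hn : 0 < n := lt_of_le_of_lt (Nat.zero_le q) hq
  set p : EuclideanSpace ℝ (Fin n) := EuclideanSpace.single (⟨0, hn⟩ : Fin n) (max R0 0 + 1)
    with hpdef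
  have hpnorm : ‖p‖ = max R0 0 + 1 := by
    rw [hpdef, EuclideanSpace.norm_single]
    exact Real.norm_of_nonneg (by positivity)
  have hpω : p ∉ ω := by
    intro hp
    have h1 := mem_closedBall.1 (hR0 hp)
    rw [dist_zero_right, hpnorm] at h1
    have h2 : R0 ≤ max R0 0 := le_max_left _ _
    linarith
  -- frontier is nonempty
  have hfr : (frontier ω).Nonempty := by
    by_contra h
    rw [not_nonempty_iff_eq_empty] at h
    have : ω = univ := (isClopen_iff_frontier_eq_empty.2 h).eq_univ hne
    exact hpω (this ▸ mem_univ p)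
  have hSne_bot : S ≠ ⊥ := by
    obtain ⟨y, hy⟩ := hfr
    exact fun h => absurd (h ▸ hKf y hy) (not_lt.2 bot_le)
  set s : ℝ := S.toReal with hsdef
  have hSs : S = (s : EReal) := (EReal.coe_toReal hSne_top hSne_bot).symm
  -- extremal point of K
  obtain ⟨x0, hx0K, hx0max⟩ := hKcomp.exists_isMaxOn ⟨z, hzK⟩
    ((continuous_id.dist continuous_const).continuousOn :
      ContinuousOn (fun x => dist x p) K)
  rw [isMaxOn_iff] at hx0max
  have hx0ω : x0 ∈ ω := hKsub hx0K
  set R : ℝ := dist x0 p with hRdef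
  have hRpos : 0 < R := dist_pos.2 fun h => hpω (h ▸ hx0ω)
  -- radius
  have hcne : ωᶜ.Nonempty := ⟨p, hpω⟩
  have hinf : 0 < infDist x0 ωᶜ :=
    (hω.isClosed_compl.notMem_iff_infDist_pos hcne).1 (by simpa using hx0ω)
  set r : ℝ := infDist x0 ωᶜ / 2 with hrdef
  have hrpos : 0 < r := by positivity
  have hball : closedBall x0 r ⊆ ω := by
    intro y hy
    by_contra hyω
    have h1 : infDist x0 ωᶜ ≤ dist x0 y := infDist_le_dist_of_mem hyω
    rw [mem_closedBall, dist_comm] at hy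
    rw [hrdef] at hy
    linarith
  have hrR : 2 * r ≤ R := by
    have : infDist x0 ωᶜ ≤ dist x0 p := infDist_le_dist_of_mem hpω
    rw [hrdef]; linarith
  -- direction
  set e : EuclideanSpace ℝ (Fin n) := R⁻¹ • (x0 - p) with hedef
  have henorm : ‖e‖ = 1 := by
    rw [hedef, norm_smul, Real.norm_eq_abs, abs_of_pos (by positivity), ← dist_eq_norm, ← hRdef]
    field_simp
  have he0 : e ≠ 0 := by
    intro h; rw [h, norm_zero] at henorm; linarith
  set γ : ℝ := r ^ 2 / (4 * R) with hγdef
  have hγpos : 0 < γ := by positivity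
  have hγr : γ ≤ r := by
    rw [hγdef, div_le_iff₀ (by positivity)]
    nlinarith
  -- height bound on K ∩ sphere
  have hKh : ∀ y ∈ K, dist y x0 = r → ⟪e, y - x0⟫ ≤ -(2 * γ) := by
    intro y hyK hyd
    have h1 : dist y p ≤ R := hx0max y hyK
    have h2 : ‖(y - x0) + (x0 - p)‖ ^ 2 ≤ R ^ 2 := by
      have hh : (y - x0) + (x0 - p) = y - p := by abel
      rw [hh, ← dist_eq_norm]
      nlinarith [dist_nonneg (x := y) (y := p)]
    rw [norm_add_sq_real] at h2
    have h3 : ‖y - x0‖ = r := by rw [← dist_eq_norm]; exact hyd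
    have h4 : ‖x0 - p‖ = R := by rw [← dist_eq_norm]
    rw [h3, h4] at h2
    have h5 : ⟪y - x0, x0 - p⟫ ≤ -(r ^ 2) / 2 := by linarith
    have h6 : ⟪e, y - x0⟫ = R⁻¹ * ⟪y - x0, x0 - p⟫ := by
      rw [hedef, real_inner_smul_left, real_inner_comm]
    have h7 : R⁻¹ * ⟪y - x0, x0 - p⟫ ≤ R⁻¹ * (-(r ^ 2) / 2) :=
      mul_le_mul_of_nonneg_left h5 (inv_nonneg.2 hRpos.le)
    have h8 : R⁻¹ * (-(r ^ 2) / 2) = -(2 * γ) := by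
      rw [hγdef]; field_simp; ring
    rw [h6]
    linarith
  -- the affine subspace
  obtain ⟨D, hD1, hD2⟩ := exists_superset_finrank_eq q (ℝ ∙ e) (q + 1)
    (by rw [finrank_span_singleton he0]; omega)
    (by rw [finrank_euclideanSpace_fin]; omega)
  set P := AffineSubspace.mk' x0 D with hPdef
  have hPdir : Module.finrank ℝ P.direction = q + 1 := by
    rw [hPdef, AffineSubspace.direction_mk']; exact hD2
  -- the cap and its bound
  set Sph : Set (EuclideanSpace ℝ (Fin n)) :=
    sphere x0 r ∩ (P : Set (EuclideanSpace ℝ (Fin n))) with hSphdef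
  set C : Set (EuclideanSpace ℝ (Fin n)) := Sph ∩ {y | -γ ≤ ⟪e, y - x0⟫} with hCdef
  have hCcomp : IsCompact C := by
    rw [hCdef, hSphdef, inter_assoc]
    exact (isCompact_sphere x0 r).inter_right
      (P.closed_of_finiteDimensional.inter (isClosed_le continuous_const
        (continuous_const.inner (continuous_id.sub continuous_const))))
  have hCsub' : C ⊆ closure ω := by
    intro y hy
    exact subset_closure (hball (sphere_subset_closedBall hy.1.1))
  have hCK : ∀ y ∈ C, u y < S := by
    intro y hy
    by_contra hle
    have hyK : y ∈ K := ⟨hCsub' hy, not_lt.1 hle⟩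
    have := hKh y hyK (mem_sphere.1 hy.1.1)
    have hy2 : -γ ≤ ⟪e, y - x0⟫ := hy.2
    linarith
  obtain ⟨b, hbS, hbC⟩ : ∃ b : ℝ, (b : EReal) < S ∧ ∀ y ∈ C, u y ≤ (b : EReal) := by
    rcases C.eq_empty_or_nonempty with hCe | hCne
    · refine ⟨s - 1, ?_, by rw [hCe]; simp⟩
      rw [hSs]
      exact_mod_cast sub_one_lt s
    · obtain ⟨y0, hy0C, hy0max⟩ := usc_exists_max hCcomp hCne (husc.mono hCsub')
      obtain ⟨β, hβ1, hβ2⟩ := exists_between (hCK y0 hy0C)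
      have hβt : β ≠ ⊤ := (hβ2.trans_le le_top).ne
      have hβb : β ≠ ⊥ := (bot_le.trans_lt hβ1).ne'
      refine ⟨β.toReal, ?_, ?_⟩
      · rw [EReal.coe_toReal hβt hβb]; exact hβ2
      · intro y hy
        rw [EReal.coe_toReal hβt hβb]
        exact (hy0max y hy).trans hβ1.le
  have hbs : b < s := by
    rw [hSs] at hbS
    exact_mod_cast hbS
  -- the barrier
  obtain ⟨μ, hμdef⟩ : ∃ μ : ℝ, μ = (s - b) / (4 * r) := ⟨_, rfl⟩
  have hμpos : 0 < μ := by rw [hμdef]; exact div_pos (by linarith) (by positivity)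
  obtain ⟨α, hαdef⟩ : ∃ α : ℝ, α = s - μ * γ / 2 := ⟨_, rfl⟩
  set l := affineBarrier e x0 α μ with hldef
  have hsphere : ∀ x ∈ Sph, u x ≤ (l x : EReal) := by
    intro x hx
    have hxd : dist x x0 = r := mem_sphere.1 hx.1
    have hxn : ‖x - x0‖ = r := by rw [← dist_eq_norm]; exact hxd
    have ht : |⟪e, x - x0⟫| ≤ r := by
      calc |⟪e, x - x0⟫| ≤ ‖e‖ * ‖x - x0‖ := abs_real_inner_le_norm e (x - x0)
        _ = r := by rw [henorm, hxn, one_mul]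
    have hlx : l x = α - μ * ⟪e, x - x0⟫ := rfl
    by_cases hcap : -γ ≤ ⟪e, x - x0⟫
    · have h1 : u x ≤ (b : EReal) := hbC x ⟨hx, hcap⟩
      have h2 : b ≤ α - μ * ⟪e, x - x0⟫ := by
        have ht1 : ⟪e, x - x0⟫ ≤ r := (abs_le.1 ht).2
        have h3 : μ * ⟪e, x - x0⟫ ≤ μ * r := mul_le_mul_of_nonneg_left ht1 hμpos.le
        have h4 : μ * (γ / 2 + r) ≤ (s - b) * (3 / 8) := by
          rw [hμdef, div_mul_eq_mul_div, div_le_iff₀ (by positivity)]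
          nlinarith [mul_le_mul_of_nonneg_left hγr (by linarith : (0:ℝ) ≤ s - b)]
        rw [hαdef]
        linarith
      rw [hlx]
      exact h1.trans (by exact_mod_cast h2)
    · have h1 : u x ≤ S := by
        rw [hSz]
        exact hzmax x (subset_closure (hball (sphere_subset_closedBall hx.1)))
      have h2 : s ≤ α - μ * ⟪e, x - x0⟫ := by
        have ht2 : ⟪e, x - x0⟫ ≤ -γ := (not_le.1 hcap).le
        have h3 : μ * ⟪e, x - x0⟫ ≤ μ * (-γ) := mul_le_mul_of_nonneg_left ht2 hμpos.le
        rw [hαdef]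
        linarith [mul_nonneg hμpos.le hγpos.le]
      rw [hlx, hSs] at *
      exact h1.trans (by exact_mod_cast h2)
  have hclball : closure (ball x0 r) ⊆ ω := by
    rw [closure_ball x0 hrpos.ne']
    exact hball
  have happ := hu3 P hPdir x0 r hrpos hclball l hsphere
  have hx0P : x0 ∈ (P : Set (EuclideanSpace ℝ (Fin n))) := AffineSubspace.self_mem_mk' x0 D
  have hfinal := happ x0 ⟨mem_closedBall_self hrpos.le, hx0P⟩
  have hux0 : u x0 = S := le_antisymm (hSz ▸ hzmax x0 (subset_closure hx0ω)) hx0K.2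
  have hlx0 : l x0 = α := by
    show α - μ * ⟪e, x0 - x0⟫ = α
    rw [sub_self, inner_zero_right]
    ring
  rw [hux0, hlx0, hSs] at hfinal
  have : s ≤ α := by exact_mod_cast hfinal
  rw [hαdef] at this
  linarith [mul_pos hμpos hγpos]
end
end

section
/- Gluing theorem: Let ω₁ and ω be open sets in ℝⁿ with ω₁ ⊆ ω, let u be real q-convex on ω, and let u₁ be real q-convex on ω₁, such that limsup_{y→x, y∈ω₁} u₁(y) ≤ u(x) for every x ∈ ∂ω₁ ∩ ω. Then the function ψ defined by ψ(x) = max{u(x), u₁(x)} for x ∈ ω₁ and ψ(x) = u(x) for x ∈ ω∖ω₁ is real q-convex on ω. -/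
open Metric Set Filter

noncomputable section

lemma usc_isClosed_sep {E : Type*} [TopologicalSpace E] {f : E → EReal} {C : Set E}
    (hC : IsClosed C) (hf : UpperSemicontinuousOn f C) (y : EReal) :
    IsClosed {x | x ∈ C ∧ y ≤ f x} := by
  refine isClosed_of_closure_subset ?_
  intro x hx
  have hxC : x ∈ C := hC.closure_subset (closure_mono (fun z hz => hz.1) hx)
  refine ⟨hxC, ?_⟩
  by_contra h
  push_neg at h
  have h2 := hf x hxC y h
  rw [eventually_nhdsWithin_iff] at h2
  obtain ⟨z, hz1, hz2⟩ := mem_closure_iff_nhds.1 hx _ h2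
  exact absurd hz2.2 (not_le.2 (hz1 hz2.1))

lemma usc_exists_max_s3 {E : Type*} [TopologicalSpace E] [T2Space E] {f : E → EReal} {C : Set E}
    (hC : IsCompact C) (hne : C.Nonempty) (hf : UpperSemicontinuousOn f C) :
    ∃ a ∈ C, ∀ x ∈ C, f x ≤ f a := by
  set S := sSup (f '' C) with hS
  rcases eq_bot_or_bot_lt S with hSbot | hSbot
  · obtain ⟨a, ha⟩ := hne
    exact ⟨a, ha, fun x hx =>
      le_trans (le_trans (le_sSup (Set.mem_image_of_mem f hx)) hSbot.le) bot_le⟩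
  · haveI : Nonempty {y : EReal // y < S} := ⟨⟨⊥, hSbot⟩⟩
    set K : {y : EReal // y < S} → Set E := fun y => {x | x ∈ C ∧ y.1 ≤ f x} with hK
    have hdir : Directed (· ⊇ ·) K := by
      intro y₁ y₂
      exact ⟨⟨max y₁.1 y₂.1, max_lt y₁.2 y₂.2⟩,
        fun x hx => ⟨hx.1, (le_max_left _ _).trans hx.2⟩,
        fun x hx => ⟨hx.1, (le_max_right _ _).trans hx.2⟩⟩
    have hKne : ∀ y, (K y).Nonempty := by
      intro y
      obtain ⟨b, ⟨x, hxC, rfl⟩, hb⟩ := lt_sSup_iff.1 y.2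
      exact ⟨x, hxC, hb.le⟩
    have hKcl : ∀ y, IsClosed (K y) := fun y => usc_isClosed_sep hC.isClosed hf y.1
    have hKcomp : ∀ y, IsCompact (K y) :=
      fun y => hC.of_isClosed_subset (hKcl y) (fun x hx => hx.1)
    obtain ⟨a, ha⟩ := IsCompact.nonempty_iInter_of_directed_nonempty_isCompact_isClosed
      K hdir hKne hKcomp hKcl
    simp only [mem_iInter] at ha
    have haC : a ∈ C := (ha ⟨⊥, hSbot⟩).1
    have hSa : S ≤ f a := by
      by_contra h
      push_neg at h
      obtain ⟨y, hy1, hy2⟩ := exists_between h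
      exact absurd (ha ⟨y, hy2⟩).2 (not_le.2 hy1)
    exact ⟨a, haC, fun x hx => le_trans (le_sSup (Set.mem_image_of_mem f hx)) hSa⟩

set_option maxHeartbeats 1000000 in
open Classical in
/-- Gluing theorem: if `u` is real q-convex on `ω`, `u₁` is real q-convex on `ω₁ ⊆ ω`,
and `limsup_{y→x, y∈ω₁} u₁(y) ≤ u(x)` for every `x ∈ ∂ω₁ ∩ ω`, then the function equal
to `max{u, u₁}` on `ω₁` and to `u` on `ω ∖ ω₁` is real q-convex on `ω`. -/
theorem realQConvexOn_glue {n q : ℕ}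
    (ω ω₁ : Set (EuclideanSpace ℝ (Fin n))) (hω : IsOpen ω) (hω₁ : IsOpen ω₁)
    (hsub : ω₁ ⊆ ω)
    (u u₁ : EuclideanSpace ℝ (Fin n) → EReal)
    (hu : RealQConvexOn q u ω) (hu₁ : RealQConvexOn q u₁ ω₁)
    (hlim : ∀ x ∈ frontier ω₁ ∩ ω, Filter.limsup u₁ (nhdsWithin x ω₁) ≤ u x) :
    RealQConvexOn q (fun x => if x ∈ ω₁ then max (u x) (u₁ x) else u x) ω := by

  set ψ : EuclideanSpace ℝ (Fin n) → EReal :=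
    fun x => if x ∈ ω₁ then max (u x) (u₁ x) else u x with hψ
  have hψ_of_mem : ∀ x ∈ ω₁, ψ x = max (u x) (u₁ x) := fun x h => if_pos h
  have hψ_of_not_mem : ∀ (x), x ∉ ω₁ → ψ x = u x := fun x h => if_neg h
  -- ψ is not ⊤ on ω
  have hψtop : ∀ x ∈ ω, ψ x ≠ ⊤ := by
    intro x hx
    by_cases h : x ∈ ω₁
    · rw [hψ_of_mem x h]
      exact (max_lt ((hu.1 x hx).lt_top) ((hu₁.1 x h).lt_top)).ne
    · rw [hψ_of_not_mem x h]
      exact hu.1 x hx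
  -- u ≤ ψ, u₁ ≤ ψ on ω₁
  have huψ : ∀ x, u x ≤ ψ x := by
    intro x
    by_cases h : x ∈ ω₁
    · rw [hψ_of_mem x h]; exact le_max_left _ _
    · rw [hψ_of_not_mem x h]
  have hu₁ψ : ∀ x ∈ ω₁, u₁ x ≤ ψ x := by
    intro x h
    rw [hψ_of_mem x h]; exact le_max_right _ _
  -- upper semicontinuity of ψ on ω
  have husc : UpperSemicontinuousOn ψ ω := by
    intro x hx y hy
    by_cases h1 : x ∈ ω₁
    · rw [hψ_of_mem x h1] at hy
      have hyu : u x < y := lt_of_le_of_lt (le_max_left _ _) hy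
      have hyu₁ : u₁ x < y := lt_of_le_of_lt (le_max_right _ _) hy
      have h2 : ∀ᶠ z in nhdsWithin x ω, u z < y := hu.2.1 x hx y hyu
      have h3 : ∀ᶠ z in nhdsWithin x ω₁, u₁ z < y := hu₁.2.1 x h1 y hyu₁
      rw [nhdsWithin_eq_nhds.2 (hω₁.mem_nhds h1)] at h3
      have h4 : ∀ᶠ z in nhds x, z ∈ ω₁ := hω₁.mem_nhds h1
      filter_upwards [h2, (h3.and h4).filter_mono nhdsWithin_le_nhds] with z hz1 hz2
      rw [hψ_of_mem z hz2.2]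
      exact max_lt hz1 hz2.1
    · rw [hψ_of_not_mem x h1] at hy
      have h2 : ∀ᶠ z in nhdsWithin x ω, u z < y := hu.2.1 x hx y hy
      by_cases h5 : x ∈ closure ω₁
      · have hfr : x ∈ frontier ω₁ ∩ ω := by
          refine ⟨⟨h5, ?_⟩, hx⟩
          rwa [hω₁.interior_eq]
        have h6 : Filter.limsup u₁ (nhdsWithin x ω₁) < y := lt_of_le_of_lt (hlim x hfr) hy
        have h7 : ∀ᶠ z in nhdsWithin x ω₁, u₁ z < y := eventually_lt_of_limsup_lt h6
        rw [eventually_nhdsWithin_iff] at h7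
        filter_upwards [h2, h7.filter_mono nhdsWithin_le_nhds] with z hz1 hz2
        by_cases hz3 : z ∈ ω₁
        · rw [hψ_of_mem z hz3]
          exact max_lt hz1 (hz2 hz3)
        · rw [hψ_of_not_mem z hz3]
          exact hz1
      · have h6 : ∀ᶠ z in nhds x, z ∈ (closure ω₁)ᶜ :=
          (isClosed_closure.isOpen_compl).mem_nhds h5
        filter_upwards [h2, h6.filter_mono nhdsWithin_le_nhds] with z hz1 hz2
        rw [hψ_of_not_mem z (fun hz3 => hz2 (subset_closure hz3))]
        exact hz1
  refine ⟨hψtop, husc, ?_⟩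
  intro P hP c r hr hcl l hsph
  rw [closure_ball c hr.ne'] at hcl
  have hPcl : IsClosed (P : Set (EuclideanSpace ℝ (Fin n))) := P.closed_of_finiteDimensional
  -- u ≤ l on the closed ball ∩ P
  have hul : ∀ x ∈ closedBall c r ∩ (P : Set (EuclideanSpace ℝ (Fin n))),
      u x ≤ (l x : EReal) := by
    refine hu.2.2 P hP c r hr (by rwa [closure_ball c hr.ne']) l ?_
    intro x hx
    exact le_trans (huψ x) (hsph x hx)
  by_contra hcon
  push_neg at hcon
  obtain ⟨xs, hxsC, hxs⟩ := hcon
  set C : Set (EuclideanSpace ℝ (Fin n)) := closedBall c r ∩ (P : Set _) with hCdef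
  have hCcomp : IsCompact C := (isCompact_closedBall c r).inter_right hPcl
  have hCsub : C ⊆ ω := fun x hx => hcl hx.1
  -- the function v = ψ - l
  set v : EuclideanSpace ℝ (Fin n) → EReal :=
    fun x => ψ x + ((-(l x) : ℝ) : EReal) with hv
  have hvsub : ∀ x, v x = ψ x - ((l x : ℝ) : EReal) := by
    intro x
    rw [sub_eq_add_neg, ← EReal.coe_neg]
  have hlcont : Continuous fun x : EuclideanSpace ℝ (Fin n) => ((-(l x) : ℝ) : EReal) :=
    continuous_coe_real_ereal.comp (l.continuous_of_finiteDimensional.neg)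
  have hvusc : UpperSemicontinuousOn v C := by
    refine UpperSemicontinuousOn.add' (husc.mono hCsub)
      (hlcont.upperSemicontinuous.upperSemicontinuousOn C) ?_
    intro x hx
    exact EReal.continuousAt_add (Or.inr (EReal.coe_ne_bot _)) (Or.inr (EReal.coe_ne_top _))
  obtain ⟨xm, hxmC, hxm⟩ := usc_exists_max_s3 hCcomp ⟨xs, hxsC⟩ hvusc
  set M := v xm with hM
  have hM0 : 0 < M := by
    refine lt_of_lt_of_le ?_ (hxm xs hxsC)
    rw [hvsub, EReal.lt_sub_iff_add_lt (Or.inl (EReal.coe_ne_bot _))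
      (Or.inl (EReal.coe_ne_top _)), zero_add]
    exact hxs
  have hMtop : M ≠ ⊤ := by
    intro h
    have h2 : ψ xm = M + ((l xm : ℝ) : EReal) := by
      conv_lhs => rw [← EReal.sub_add_cancel (a := ψ xm) (b := l xm)]
      rw [← hvsub xm, ← hM]
    rw [h, EReal.top_add_coe] at h2
    exact hψtop xm (hCsub hxmC) h2
  set m : ℝ := M.toReal with hm
  have hmM : (m : EReal) = M := EReal.coe_toReal hMtop (ne_bot_of_gt hM0)
  have hmpos : 0 < m := by
    have h := hM0
    rw [← hmM] at h
    exact_mod_cast h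
  -- a consequence: ψ x ≤ l x + m on C
  have hψle : ∀ x ∈ C, ψ x ≤ ((l x + m : ℝ) : EReal) := by
    intro x hx
    have h1 : v x ≤ (m : EReal) := by rw [hmM]; exact hxm x hx
    rw [hvsub] at h1
    rw [EReal.sub_le_iff_le_add (Or.inl (EReal.coe_ne_bot _))
      (Or.inl (EReal.coe_ne_top _))] at h1
    calc ψ x ≤ (m : EReal) + (l x : EReal) := h1
    _ = ((l x + m : ℝ) : EReal) := by norm_cast; ring
  -- the set of maximum points
  set K : Set (EuclideanSpace ℝ (Fin n)) := {x | x ∈ C ∧ M ≤ v x} with hKdef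
  have hKcl : IsClosed K := usc_isClosed_sep hCcomp.isClosed hvusc M
  have hKcomp : IsCompact K := hCcomp.of_isClosed_subset hKcl (fun x hx => hx.1)
  have hKne : K.Nonempty := ⟨xm, hxmC, le_refl _⟩
  -- points of K satisfy ψ x = l x + m, lie in ω₁ and in the open ball
  have hKeq : ∀ x ∈ K, ψ x = ((l x + m : ℝ) : EReal) := by
    intro x hx
    refine le_antisymm (hψle x hx.1) ?_
    have h1 : (m : EReal) ≤ v x := by rw [hmM]; exact hx.2
    rw [hvsub] at h1
    have h2 : (m : EReal) + (l x : EReal) ≤ ψ x := EReal.add_le_of_le_sub h1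
    calc ((l x + m : ℝ) : EReal) = (m : EReal) + (l x : EReal) := by norm_cast; ring
    _ ≤ ψ x := h2
  have hKmem : ∀ x ∈ K, x ∈ ball c r ∩ ω₁ := by
    intro x hx
    have hxC : x ∈ C := hx.1
    have hlt : ((l x : ℝ) : EReal) < ψ x := by
      rw [hKeq x hx]
      exact_mod_cast (by linarith : l x < l x + m)
    constructor
    · rcases lt_or_eq_of_le (mem_closedBall.1 hxC.1) with h | h
      · exact mem_ball.2 h
      · exact absurd (hsph x ⟨mem_sphere.2 h, hxC.2⟩) (not_le.2 hlt)
    · by_contra h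
      rw [hψ_of_not_mem x h] at hlt
      exact absurd (hul x hxC) (not_le.2 hlt)
  -- choose z outside the closed ball
  obtain ⟨w₀, hw₀P, hw₀⟩ : ∃ w₀, w₀ ∈ P.direction ∧ w₀ ≠ (0 : EuclideanSpace ℝ (Fin n)) := by
    refine Submodule.exists_mem_ne_zero_of_ne_bot ?_
    intro h
    rw [h] at hP
    simp at hP
  set z : EuclideanSpace ℝ (Fin n) := c + ((2 * r) / ‖w₀‖) • w₀ with hzdef
  have hzout : z ∉ closedBall c r := by
    have hdist : dist z c = 2 * r := by
      rw [hzdef, dist_eq_norm, add_sub_cancel_left, norm_smul, norm_div, Real.norm_eq_abs,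
        Real.norm_eq_abs, abs_of_pos (by positivity : (0:ℝ) < 2 * r),
        abs_of_pos (norm_pos_iff.2 hw₀), div_mul_cancel₀]
      exact (norm_pos_iff.2 hw₀).ne'
    rw [mem_closedBall, hdist]
    linarith
  -- the farthest point of K from z
  obtain ⟨x₀, hx₀K, hx₀max⟩ := hKcomp.exists_isMaxOn hKne
    ((continuous_id.dist continuous_const).continuousOn :
      ContinuousOn (fun x => dist x z) K)
  rw [isMaxOn_iff] at hx₀max
  have hx₀C : x₀ ∈ C := hx₀K.1
  have hx₀P : x₀ ∈ (P : Set (EuclideanSpace ℝ (Fin n))) := hx₀C.2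
  have hx₀ball : x₀ ∈ ball c r := (hKmem x₀ hx₀K).1
  have hx₀ω₁ : x₀ ∈ ω₁ := (hKmem x₀ hx₀K).2
  have hzx₀ : x₀ ≠ z := fun h => hzout (h ▸ hx₀C.1)
  set w : EuclideanSpace ℝ (Fin n) := x₀ - z with hwdef
  set R : ℝ := ‖w‖ with hRdef
  have hR : 0 < R := norm_pos_iff.2 (sub_ne_zero.2 hzx₀)
  have hRdist : ∀ x ∈ K, ‖x - z‖ ≤ R := by
    intro x hx
    have := hx₀max x hx
    rwa [dist_eq_norm, dist_eq_norm] at this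
  -- choose δ
  obtain ⟨δ, hδpos, hδsub⟩ := Metric.nhds_basis_closedBall.mem_iff.1
    ((hω₁.inter isOpen_ball).mem_nhds ⟨hx₀ω₁, hx₀ball⟩)
  -- the key geometric fact: points of K on the sphere around x₀ have inner ≤ -δ²/2
  have hKS : ∀ x ∈ K, x ∈ sphere x₀ δ → inner ℝ w (x - x₀) ≤ -δ^2/2 := by
    intro x hxK hxS
    have h1 : ‖x - z‖ ≤ R := hRdist x hxK
    have h2 : ‖x - x₀‖ = δ := by rwa [← dist_eq_norm, ← mem_sphere]
    have h3 : x - z = (x - x₀) + w := by rw [hwdef]; abel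
    have h4 : ‖x - z‖^2 ≤ R^2 := by nlinarith [norm_nonneg (x - z)]
    rw [h3, norm_add_sq_real, h2] at h4
    have h5 : (inner ℝ (x - x₀) w : ℝ) = inner ℝ w (x - x₀) := real_inner_comm _ _
    nlinarith [h4, h5]

  -- the compact region of the sphere where K is absent
  set B : Set (EuclideanSpace ℝ (Fin n)) :=
    sphere x₀ δ ∩ (P : Set _) ∩ {x | -δ^2/4 ≤ inner ℝ w (x - x₀)} with hBdef
  have hinnercont : Continuous fun x : EuclideanSpace ℝ (Fin n) => (inner ℝ w (x - x₀) : ℝ) :=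
    continuous_const.inner (continuous_id.sub continuous_const)
  have hBcomp : IsCompact B :=
    ((isCompact_sphere x₀ δ).inter_right hPcl).inter_right
      (isClosed_le continuous_const hinnercont)
  have hδω₁ : closedBall x₀ δ ⊆ ω₁ := fun x hx => (hδsub hx).1
  have hδball : closedBall x₀ δ ⊆ ball c r := fun x hx => (hδsub hx).2
  have hBsubC : B ⊆ C := by
    intro x hx
    exact ⟨ball_subset_closedBall (hδball (sphere_subset_closedBall hx.1.1)), hx.1.2⟩
  -- a uniform gap η on B
  obtain ⟨η, hηpos, hηB⟩ : ∃ η : ℝ, 0 < η ∧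
      ∀ x ∈ B, ψ x ≤ ((l x + (m - η) : ℝ) : EReal) := by
    rcases B.eq_empty_or_nonempty with hB | hB
    · refine ⟨1, one_pos, ?_⟩
      rw [hB]
      intro x hx
      exact absurd hx (notMem_empty x)
    · obtain ⟨xB, hxBB, hxBmax⟩ := usc_exists_max_s3 hBcomp hB (hvusc.mono hBsubC)
      have hxBK : xB ∉ K := by
        intro h
        have h2 := hKS xB h hxBB.1.1
        have h3 := hxBB.2
        simp only [mem_setOf_eq] at h3
        nlinarith [hδpos]
      have hvlt : v xB < (m : EReal) := by
        rw [hmM]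
        exact lt_of_not_ge (fun h => hxBK ⟨hBsubC hxBB, h⟩)
      obtain ⟨t, ht1, ht2⟩ := EReal.exists_between_coe_real hvlt
      refine ⟨m - t, by exact_mod_cast sub_pos.2 (by exact_mod_cast ht2), ?_⟩
      intro x hx
      have h1 : v x ≤ (t : EReal) := le_trans (hxBmax x hx) ht1.le
      rw [hvsub, EReal.sub_le_iff_le_add (Or.inl (EReal.coe_ne_bot _))
        (Or.inl (EReal.coe_ne_top _))] at h1
      calc ψ x ≤ (t : EReal) + (l x : EReal) := h1
      _ = ((l x + (m - (m - t)) : ℝ) : EReal) := by norm_cast; ring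
  set ε : ℝ := η / (δ * R + δ^2/4) with hεdef
  have hden : 0 < δ * R + δ^2/4 := by positivity
  have hεpos : 0 < ε := div_pos hηpos hden
  -- the comparison affine function
  set inn : EuclideanSpace ℝ (Fin n) →ᵃ[ℝ] ℝ :=
    ((innerSL ℝ w).toLinearMap).toAffineMap with hinndef
  set lε : EuclideanSpace ℝ (Fin n) →ᵃ[ℝ] ℝ :=
    l + (-ε) • inn + AffineMap.const ℝ (EuclideanSpace ℝ (Fin n))
      (m + ε * (inner ℝ w x₀) - ε * (δ^2/4)) with hlεdef
  have hlεval : ∀ x, lε x = l x + m - ε * (inner ℝ w (x - x₀) + δ^2/4) := by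
    intro x
    have : (inner ℝ w (x - x₀) : ℝ) = inner ℝ w x - inner ℝ w x₀ := inner_sub_right w x x₀
    simp only [hlεdef, hinndef, AffineMap.coe_add, AffineMap.coe_smul, Pi.add_apply,
      Pi.smul_apply, AffineMap.const_apply, LinearMap.coe_toAffineMap,
      ContinuousLinearMap.coe_coe, innerSL_apply_apply, smul_eq_mul]
    rw [this]
    ring
  -- comparison on the small sphere
  have hsph₁ : ∀ x ∈ sphere x₀ δ ∩ (P : Set (EuclideanSpace ℝ (Fin n))),
      u₁ x ≤ (lε x : EReal) := by
    intro x hx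
    have hxω₁ : x ∈ ω₁ := hδω₁ (sphere_subset_closedBall hx.1)
    have hxC : x ∈ C := ⟨ball_subset_closedBall (hδball (sphere_subset_closedBall hx.1)), hx.2⟩
    have hxδ : ‖x - x₀‖ = δ := by
      rw [← dist_eq_norm]
      exact mem_sphere.1 hx.1
    refine le_trans (hu₁ψ x hxω₁) ?_
    by_cases hcase : -δ^2/4 ≤ inner ℝ w (x - x₀)
    · have hxB : x ∈ B := ⟨hx, hcase⟩
      refine le_trans (hηB x hxB) ?_
      refine EReal.coe_le_coe_iff.2 ?_
      rw [hlεval x]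
      have hinle : (inner ℝ w (x - x₀) : ℝ) ≤ R * δ := by
        calc (inner ℝ w (x - x₀) : ℝ) ≤ ‖w‖ * ‖x - x₀‖ := real_inner_le_norm w (x - x₀)
        _ = R * δ := by rw [hxδ]
      have hkey : ε * (inner ℝ w (x - x₀) + δ^2/4) ≤ η := by
        have h1 : (inner ℝ w (x - x₀) : ℝ) + δ^2/4 ≤ δ * R + δ^2/4 := by linarith
        have h2 : ε * (inner ℝ w (x - x₀) + δ^2/4) ≤ ε * (δ * R + δ^2/4) :=
          mul_le_mul_of_nonneg_left h1 hεpos.le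
        rw [hεdef, div_mul_cancel₀ _ hden.ne'] at h2
        exact h2
      linarith
    · push_neg at hcase
      refine le_trans (hψle x hxC) ?_
      refine EReal.coe_le_coe_iff.2 ?_
      rw [hlεval x]
      nlinarith [hεpos]
  -- apply q-convexity of u₁ on the small ball
  have hball₁ : closure (ball x₀ δ) ⊆ ω₁ := by
    rw [closure_ball x₀ hδpos.ne']
    exact hδω₁
  have hfinal := hu₁.2.2 P hP x₀ δ hδpos hball₁ lε hsph₁ x₀
    ⟨mem_closedBall_self hδpos.le, hx₀P⟩
  -- derive the contradiction
  have hlεx₀ : lε x₀ = l x₀ + m - ε * (δ^2/4) := by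
    rw [hlεval x₀]
    simp
  have h1 : u₁ x₀ < ((l x₀ + m : ℝ) : EReal) := by
    refine lt_of_le_of_lt hfinal ?_
    rw [hlεx₀]
    have hpos : 0 < ε * (δ^2/4) := by positivity
    exact_mod_cast (by linarith : l x₀ + m - ε * (δ^2/4) < l x₀ + m)
  have h2 : u x₀ < ((l x₀ + m : ℝ) : EReal) := by
    refine lt_of_le_of_lt (hul x₀ hx₀C) ?_
    exact_mod_cast (by linarith : l x₀ < l x₀ + m)
  have h3 : ψ x₀ < ((l x₀ + m : ℝ) : EReal) := by
    rw [hψ_of_mem x₀ hx₀ω₁]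
    exact max_lt h2 h1
  rw [hKeq x₀ hx₀K] at h3
  exact lt_irrefl _ h3
end
end

section
/- Let u be a real q-convex function on an open set ω ⊆ ℝⁿ, let D be a relatively compact open subset of ω, and let f be a continuous real-valued function on ω such that u < f on an open neighborhood of cl(D). Then there exist L > 0 and a continuous function ũ ∈ C¹_L(ℝⁿ) which is real q-convex on an open neighborhood of cl(D) and satisfies u < ũ < f on cl(D). -/
open Metric Set Filter

noncomputable section

/-- `g ∈ C¹_L(ω)`: the function `x ↦ g(x) + (L/2)‖x‖²` is locally convex on `ω`
(functions with lower bounded Hessian). -/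
def MemC1L {E : Type*} [NormedAddCommGroup E] [NormedSpace ℝ E]
    (L : ℝ) (g : E → ℝ) (ω : Set E) : Prop :=
  ∀ x ∈ ω, ∃ U, IsOpen U ∧ x ∈ U ∧ U ⊆ ω ∧ Convex ℝ U ∧
    ConvexOn ℝ U fun y => g y + L / 2 * ‖y‖ ^ 2

/-- The supremum convolution `(u ∗ g)(x) = sup_y u(y)·g(x−y)` of two nonnegative
functions defined on all of the space. -/
def supConv {E : Type*} [NormedAddCommGroup E] (u g : E → ℝ) (x : E) : ℝ :=
  ⨆ y : E, u y * g (x - y)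

open scoped RealInnerProductSpace

lemma usc_exists_max_s10 {X : Type*} [TopologicalSpace X] {K : Set X} (hK : IsCompact K)
    (hne : K.Nonempty) {φ : X → ℝ} (hφ : UpperSemicontinuousOn φ K) :
    ∃ z ∈ K, ∀ y ∈ K, φ y ≤ φ z := by
  by_contra h
  push_neg at h
  choose! Y hYK hY using h
  have hnb : ∀ z ∈ K, ∃ U : Set X, IsOpen U ∧ z ∈ U ∧ ∀ y ∈ U ∩ K, φ y < φ (Y z) := by
    intro z hz
    have := hφ z hz (φ (Y z)) (hY z hz)
    rw [eventually_iff, mem_nhdsWithin] at this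
    obtain ⟨U, hUo, hUz, hUsub⟩ := this
    exact ⟨U, hUo, hUz, fun y hy => hUsub hy⟩
  choose! U hUo hUz hUlt using hnb
  obtain ⟨t, ht, hcov⟩ := hK.elim_nhds_subcover U (fun z hz => (hUo z hz).mem_nhds (hUz z hz))
  have htne : t.Nonempty := by
    obtain ⟨x0, hx0⟩ := hne
    obtain ⟨z, hzt, _⟩ := mem_iUnion₂.1 (hcov hx0)
    exact ⟨z, hzt⟩
  obtain ⟨zs, hzt, hmax⟩ := t.exists_max_image (fun z => φ (Y z)) htne
  have hysK : Y zs ∈ K := hYK zs (ht zs hzt)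
  obtain ⟨i, hit, hyU⟩ := mem_iUnion₂.1 (hcov hysK)
  have h1 : φ (Y zs) < φ (Y i) := hUlt i (ht i hit) (Y zs) ⟨hyU, hysK⟩
  have h2 : φ (Y i) ≤ φ (Y zs) := hmax i hit
  exact absurd (h1.trans_le h2) (lt_irrefl _)
lemma UpperSemicontinuousOn.add_continuousOn {X : Type*} [TopologicalSpace X] {s : Set X}
    {φ g : X → ℝ} (hφ : UpperSemicontinuousOn φ s) (hg : ContinuousOn g s) :
    UpperSemicontinuousOn (fun y => φ y + g y) s := by
  intro z hz a ha
  have ha' : φ z + g z < a := ha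
  have h1 := hφ z hz (φ z + (a - (φ z + g z)) / 2) (by linarith)
  have h2 : ∀ᶠ y in nhdsWithin z s, g y < g z + (a - (φ z + g z)) / 2 :=
    (hg z hz).eventually_lt_const (by linarith)
  filter_upwards [h1, h2] with y hy1 hy2
  show φ y + g y < a
  linarith

lemma const_le_affine_on_closedBall {E : Type*} [NormedAddCommGroup E] [NormedSpace ℝ E]
    {P : AffineSubspace ℝ E} {w : E} (hw : w ∈ P.direction) (hw0 : w ≠ 0)
    {c : E} {r : ℝ} (hr : 0 < r) {l : E →ᵃ[ℝ] ℝ} {m : ℝ}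
    (hm : ∀ x ∈ Metric.sphere c r ∩ (P : Set E), m ≤ l x) :
    ∀ x ∈ Metric.closedBall c r ∩ (P : Set E), m ≤ l x := by
  rintro x ⟨hxb, hxP⟩
  have hwn : 0 < ‖w‖ := norm_pos_iff.2 hw0
  have key : ∀ w' : E, w' ∈ P.direction → ‖w'‖ = ‖w‖ →
      ∃ t : ℝ, 0 ≤ t ∧ (t • w' + x) ∈ Metric.sphere c r ∩ (P : Set E) := by
    intro w' hw' hnw'
    set T := (r + ‖x - c‖) / ‖w‖ with hT
    have hT0 : 0 ≤ T := div_nonneg (by positivity) hwn.le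
    have hg : ContinuousOn (fun t : ℝ => ‖t • w' + x - c‖) (Icc 0 T) := by fun_prop
    have h0 : ‖(0:ℝ) • w' + x - c‖ ≤ r := by
      simpa using mem_closedBall_iff_norm.1 hxb
    have hT2 : r ≤ ‖T • w' + x - c‖ := by
      have h1 : ‖T • w'‖ ≤ ‖T • w' + x - c‖ + ‖c - x‖ := by
        have := norm_add_le (T • w' + x - c) (c - x)
        simpa [add_assoc] using this
      have h2 : ‖T • w'‖ = T * ‖w‖ := by
        rw [norm_smul, hnw', Real.norm_eq_abs, abs_of_nonneg hT0]
      have h3 : T * ‖w‖ = r + ‖x - c‖ := by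
        rw [hT, div_mul_cancel₀ _ hwn.ne']
      have h4 : ‖c - x‖ = ‖x - c‖ := norm_sub_rev c x
      linarith
    have := intermediate_value_Icc hT0 hg ⟨h0, hT2⟩
    obtain ⟨t, htI, hgt⟩ := this
    refine ⟨t, htI.1, ?_, ?_⟩
    · exact mem_sphere_iff_norm.2 hgt
    · have : t • w' +ᵥ x ∈ P :=
        AffineSubspace.vadd_mem_of_mem_direction (Submodule.smul_mem _ t hw') hxP
      simpa using this
  obtain ⟨t₁, ht₁, hs₁⟩ := key w hw rfl
  obtain ⟨t₂, ht₂, hs₂⟩ := key (-w) (Submodule.neg_mem _ hw) (norm_neg w)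
  have e₁ : l (t₁ • w + x) = t₁ * l.linear w + l x := by
    have := l.map_vadd x (t₁ • w)
    simpa [vadd_eq_add, smul_eq_mul] using this
  have e₂ : l (t₂ • -w + x) = -(t₂ * l.linear w) + l x := by
    have := l.map_vadd x (t₂ • -w)
    simpa [vadd_eq_add, smul_eq_mul] using this
  have m₁ := hm _ hs₁
  have m₂ := hm _ hs₂
  rw [e₁] at m₁
  rw [e₂] at m₂
  rcases le_or_gt (l.linear w) 0 with h | h
  · nlinarith
  · nlinarith

lemma RealQConvexOn.sup_const {E : Type*} [NormedAddCommGroup E] [NormedSpace ℝ E] {q : ℕ}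
    {u : E → EReal} {ω : Set E} (hu : RealQConvexOn q u ω) (m : ℝ) :
    RealQConvexOn q (fun x => u x ⊔ (m : EReal)) ω := by
  obtain ⟨hne, husc, hmax⟩ := hu
  refine ⟨fun x hx => ?_, ?_, ?_⟩
  · have : u x ⊔ (m : EReal) < ⊤ := sup_lt_iff.2 ⟨(hne x hx).lt_top, EReal.coe_lt_top m⟩
    exact this.ne
  · intro x hx a ha
    have ha' : u x ⊔ (m : EReal) < a := ha
    rw [sup_lt_iff] at ha'
    filter_upwards [husc x hx a ha'.1] with y hy
    exact sup_lt_iff.2 ⟨hy, ha'.2⟩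
  · intro P hP c r hr hsub l hl x hx
    have hdir : P.direction ≠ ⊥ := by
      intro h
      rw [h] at hP
      simp at hP
    obtain ⟨w, hw, hw0⟩ := Submodule.exists_mem_ne_zero_of_ne_bot hdir
    have h1 : ∀ y ∈ Metric.sphere c r ∩ (P : Set E), u y ≤ (l y : EReal) :=
      fun y hy => le_trans le_sup_left (hl y hy)
    have h2 : ∀ y ∈ Metric.sphere c r ∩ (P : Set E), m ≤ l y := by
      intro y hy
      have := le_trans le_sup_right (hl y hy)
      exact_mod_cast this
    have h3 := const_le_affine_on_closedBall hw hw0 hr h2 x hx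
    exact sup_le (hmax P hP c r hr hsub l h1 x hx) (by exact_mod_cast h3)

set_option maxHeartbeats 1000000

/-- Approximation: if `u` is real q-convex on `ω`, `D ⋐ ω` is open, `f` is continuous on
`ω` and `u < f` on an open neighborhood `W` of `cl(D)`, then there are `L > 0` and a
continuous `ũ ∈ C¹_L(ℝⁿ)` which is real q-convex on a neighborhood of `cl(D)` and satisfies
`u < ũ < f` on `cl(D)`. -/
theorem realQConvexOn_approx {n q : ℕ}
    (ω D : Set (EuclideanSpace ℝ (Fin n))) (hω : IsOpen ω) (hD : IsOpen D)
    (hDsub : closure D ⊆ ω) (hDcpt : IsCompact (closure D))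
    (u : EuclideanSpace ℝ (Fin n) → EReal) (hu : RealQConvexOn q u ω)
    (f : EuclideanSpace ℝ (Fin n) → ℝ) (hf : ContinuousOn f ω)
    (W : Set (EuclideanSpace ℝ (Fin n))) (hW : IsOpen W)
    (hDW : closure D ⊆ W) (hWω : W ⊆ ω)
    (huf : ∀ x ∈ W, u x < (f x : EReal)) :
    ∃ L : ℝ, 0 < L ∧ ∃ v : EuclideanSpace ℝ (Fin n) → ℝ,
      Continuous v ∧ MemC1L L v Set.univ ∧
      (∃ V, IsOpen V ∧ closure D ⊆ V ∧
        RealQConvexOn q (fun x => (v x : EReal)) V) ∧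
      ∀ x ∈ closure D, u x < (v x : EReal) ∧ v x < f x := by
  classical
  rcases (closure D).eq_empty_or_nonempty with hKe | hKne
  · -- trivial case : closure D = ∅
    have hconv0 : ConvexOn ℝ (univ : Set (EuclideanSpace ℝ (Fin n)))
        (fun y => (0:ℝ) + 1 / 2 * ‖y‖ ^ 2) := by
      refine ⟨convex_univ, fun x _ y _ a b ha hb hab => ?_⟩
      have h1 : ‖a • x + b • y‖ ≤ a * ‖x‖ + b * ‖y‖ := by
        calc ‖a • x + b • y‖ ≤ ‖a • x‖ + ‖b • y‖ := norm_add_le _ _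
          _ = a * ‖x‖ + b * ‖y‖ := by
              rw [norm_smul, norm_smul, Real.norm_eq_abs, Real.norm_eq_abs,
                abs_of_nonneg ha, abs_of_nonneg hb]
      have h2 : (0:ℝ) ≤ ‖a • x + b • y‖ := norm_nonneg _
      simp only [smul_eq_mul]
      nlinarith [norm_nonneg x, norm_nonneg y, mul_nonneg ha hb, sq_nonneg (‖x‖ - ‖y‖)]
    refine ⟨1, one_pos, fun _ => 0, continuous_const, ?_, ⟨∅, isOpen_empty, by simp [hKe], ?_⟩, ?_⟩
    · intro x _
      exact ⟨univ, isOpen_univ, mem_univ x, subset_rfl, convex_univ, hconv0⟩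
    · refine ⟨fun x hx => absurd hx (Set.notMem_empty x),
        fun x hx => absurd hx (Set.notMem_empty x),
        fun P hP c r hr hsub l hl x hx => ?_⟩
      exact absurd (hsub (subset_closure (mem_ball_self hr))) (Set.notMem_empty c)
    · intro x hx
      rw [hKe] at hx
      exact absurd hx (Set.notMem_empty x)
  · -- main case
    set K₀ := closure D with hK₀
    obtain ⟨ρ0, hρ0, hKW⟩ := hDcpt.exists_cthickening_subset_open hW hDW
    set K := cthickening ρ0 K₀ with hK
    set V := thickening (ρ0/2) K₀ with hV
    have hVK : V ⊆ K := thickening_subset_cthickening_of_le (by linarith) _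
    have hK₀V : K₀ ⊆ V := self_subset_thickening (by positivity) _
    have hK₀K : K₀ ⊆ K := self_subset_cthickening _
    have hKω : K ⊆ ω := hKW.trans hWω
    have hKcpt : IsCompact K := hDcpt.cthickening
    have hKne' : K.Nonempty := hKne.mono hK₀K
    haveI : Nonempty ↥K := hKne'.to_subtype
    -- a lower constant m
    obtain ⟨zf, hzfK, hzf⟩ := hKcpt.exists_isMinOn hKne' (hf.mono hKω)
    set m := f zf - 1 with hm
    have hmf : ∀ y ∈ K, m ≤ f y - 1 := fun y hy => by
      have := isMinOn_iff.1 hzf y hy; linarith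
    -- the truncated function ut
    set ut : EuclideanSpace ℝ (Fin n) → ℝ := fun y => (u y ⊔ (m : EReal)).toReal with hut
    have hutcoe : ∀ y ∈ ω, (ut y : EReal) = u y ⊔ (m : EReal) := by
      intro y hy
      have hne : u y ⊔ (m : EReal) ≠ ⊤ :=
        (sup_lt_iff.2 ⟨(hu.1 y hy).lt_top, EReal.coe_lt_top m⟩).ne
      have hnb : u y ⊔ (m : EReal) ≠ ⊥ :=
        ((EReal.bot_lt_coe m).trans_le le_sup_right).ne'
      exact EReal.coe_toReal hne hnb
    have hutm : ∀ y ∈ ω, m ≤ ut y := by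
      intro y hy
      have : (m : EReal) ≤ (ut y : EReal) := (hutcoe y hy).symm ▸ le_sup_right
      exact_mod_cast this
    have hutusc : UpperSemicontinuousOn ut ω := by
      intro y hy a ha
      have ha' : ut y < a := ha
      have hma : m < a := lt_of_le_of_lt (hutm y hy) ha'
      have h1 : u y < (a : EReal) := by
        have h2 : (ut y : EReal) < (a : EReal) := EReal.coe_lt_coe_iff.2 ha'
        rw [hutcoe y hy] at h2
        exact lt_of_le_of_lt le_sup_left h2
      filter_upwards [hu.2.1 y hy (a : EReal) h1, self_mem_nhdsWithin] with y' hy' hy'ω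
      have : (ut y' : EReal) < (a : EReal) := by
        rw [hutcoe y' hy'ω]
        exact sup_lt_iff.2 ⟨hy', EReal.coe_lt_coe_iff.2 hma⟩
      exact_mod_cast this
    have hutf : ∀ y ∈ K, ut y < f y := by
      intro y hy
      have : (ut y : EReal) < (f y : EReal) := by
        rw [hutcoe y (hKω hy)]
        exact sup_lt_iff.2 ⟨huf y (hKW hy), EReal.coe_lt_coe_iff.2 (by have := hmf y hy; linarith)⟩
      exact_mod_cast this
    -- upper bound M
    obtain ⟨zM, hzMK, hzM⟩ := usc_exists_max_s10 hKcpt hKne' (hutusc.mono hKω)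
    set M := ut zM with hM
    have hutM : ∀ y ∈ K, ut y ≤ M := hzM
    have hmM : m ≤ M := hutm zM (hKω hzMK)
    -- uniform gap η
    have hψ : UpperSemicontinuousOn (fun y => ut y - f y) K := by
      have := (hutusc.mono hKω).add_continuousOn (g := fun y => -(f y)) ((hf.mono hKω).neg)
      simpa [← sub_eq_add_neg] using this
    obtain ⟨zη, hzηK, hzη⟩ := usc_exists_max_s10 hKcpt hKne' hψ
    set η := f zη - ut zη with hη'
    have hη : 0 < η := by have := hutf zη hzηK; simp only [hη']; linarith
    have hgap : ∀ y ∈ K, ut y ≤ f y - η := by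
      intro y hy
      have := hzη y hy
      simp only [hη'] at *
      linarith
    -- uniform continuity of f on K
    have huc := hKcpt.uniformContinuousOn_of_continuous (hf.mono hKω)
    rw [Metric.uniformContinuousOn_iff] at huc
    obtain ⟨df, hdf, hprox⟩ := huc (η/2) (by positivity)
    -- parameters
    set σ := min (ρ0/2) (df/2) with hσ'
    have hσ : 0 < σ := lt_min (by positivity) (by positivity)
    have hσρ : σ ≤ ρ0/2 := min_le_left _ _
    have hσd : σ ≤ df/2 := min_le_right _ _
    set T := 2*(M - m) + 1 with hT'
    have hT : 0 < T := by simp only [hT']; nlinarith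
    set e := σ^2 / T with he'
    have he : 0 < e := div_pos (by positivity) hT
    have heT : e * T = σ^2 := div_mul_cancel₀ _ hT.ne'
    have hVopen : IsOpen V := isOpen_thickening
    clear_value K₀ K V m ut M η σ T e
    -- the regularized function
    obtain ⟨S, hS⟩ : ∃ S : EuclideanSpace ℝ (Fin n) → ℝ,
        ∀ x, S x = ⨆ y : K, (ut y - ‖x - (y : EuclideanSpace ℝ (Fin n))‖^2 / (2*e)) :=
      ⟨_, fun _ => rfl⟩
    obtain ⟨v, hv⟩ : ∃ v : EuclideanSpace ℝ (Fin n) → ℝ, ∀ x, v x = η/4 + S x :=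
      ⟨_, fun _ => rfl⟩
    have hbdd : ∀ x : EuclideanSpace ℝ (Fin n),
        BddAbove (Set.range fun y : K => ut y - ‖x - (y : EuclideanSpace ℝ (Fin n))‖^2 / (2*e)) := by
      intro x
      refine ⟨M, ?_⟩
      rintro _ ⟨y, rfl⟩
      have h1 := hutM y y.2
      have h2 : 0 ≤ ‖x - (y : EuclideanSpace ℝ (Fin n))‖^2 / (2*e) := by positivity
      simp only
      linarith
    have hmaxat : ∀ x : EuclideanSpace ℝ (Fin n), ∃ y0, y0 ∈ K ∧
        S x = ut y0 - ‖x - y0‖^2 / (2*e) ∧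
        ∀ y ∈ K, ut y - ‖x - y‖^2 / (2*e) ≤ ut y0 - ‖x - y0‖^2 / (2*e) := by
      intro x
      have hφ : UpperSemicontinuousOn (fun y => ut y - ‖x - y‖^2 / (2*e)) K := by
        have := (hutusc.mono hKω).add_continuousOn
          (g := fun y => -(‖x - y‖^2 / (2*e))) (Continuous.continuousOn (by fun_prop))
        simpa [← sub_eq_add_neg] using this
      obtain ⟨y0, hy0K, hy0⟩ := usc_exists_max_s10 hKcpt hKne' hφ
      refine ⟨y0, hy0K, ?_, hy0⟩
      rw [hS]
      exact le_antisymm (ciSup_le fun y => hy0 y y.2) (le_ciSup (hbdd x) ⟨y0, hy0K⟩)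
    have hSge : ∀ x ∈ K, ut x ≤ S x := by
      intro x hx
      have := le_ciSup (hbdd x) (⟨x, hx⟩ : K)
      rw [hS]
      simpa using this
    have hclose : ∀ x ∈ K, ∀ y0 ∈ K, ut x ≤ ut y0 - ‖x - y0‖^2 / (2*e) → ‖x - y0‖ ≤ σ := by
      intro x hx y0 hy0 hle
      have h1 : ‖x - y0‖^2 ≤ 2*e*(M - m) := by
        have ha := hutM y0 hy0
        have hb := hutm x (hKω hx)
        have h0 : ‖x - y0‖^2 / (2*e) ≤ M - m := by linarith
        rw [div_le_iff₀ (by positivity)] at h0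
        nlinarith
      have h2 : 2*e*(M - m) ≤ σ^2 := by
        have : 2*(M - m) ≤ T := by simp only [hT']; linarith
        nlinarith
      nlinarith [norm_nonneg (x - y0), hσ]
    -- convexity of v + (1/(2e))‖·‖²
    have hkey : ∀ i : K, ∀ x : EuclideanSpace ℝ (Fin n),
        ut i - ‖x - (i : EuclideanSpace ℝ (Fin n))‖^2 / (2*e) + (1/e)/2 * ‖x‖^2
          = ut i - ‖(i : EuclideanSpace ℝ (Fin n))‖^2 / (2*e)
            + ⟪x, (i : EuclideanSpace ℝ (Fin n))⟫ / e := by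
      intro i x
      rw [norm_sub_sq_real]
      field_simp
      ring
    have hterm2 : ∀ x : EuclideanSpace ℝ (Fin n), ∀ i : K,
        ut i - ‖(i : EuclideanSpace ℝ (Fin n))‖^2 / (2*e)
          + ⟪x, (i : EuclideanSpace ℝ (Fin n))⟫ / e ≤ S x + (1/e)/2 * ‖x‖^2 := by
      intro x i
      have h1 : ut (i : EuclideanSpace ℝ (Fin n))
          - ‖x - (i : EuclideanSpace ℝ (Fin n))‖^2 / (2*e) ≤ S x := by
        rw [hS]
        exact le_ciSup (hbdd x) i
      have h2 := hkey i x
      linarith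
    have hwconv : ConvexOn ℝ (univ : Set (EuclideanSpace ℝ (Fin n)))
        (fun y => v y + (1/e)/2 * ‖y‖^2) := by
      refine ⟨convex_univ, ?_⟩
      intro p _ s _ a b ha hb hab
      simp only [smul_eq_mul, hv]
      -- per-index estimate
      have hidx : ∀ i : K, ut i - ‖(a • p + b • s) - (i : EuclideanSpace ℝ (Fin n))‖^2 / (2*e)
          ≤ a * (S p + (1/e)/2 * ‖p‖^2) + b * (S s + (1/e)/2 * ‖s‖^2)
            - (1/e)/2 * ‖a • p + b • s‖^2 := by
        intro i
        have h1 := hkey i (a • p + b • s)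
        have h2 := hterm2 p i
        have h3 := hterm2 s i
        have hin : ⟪a • p + b • s, (i : EuclideanSpace ℝ (Fin n))⟫
            = a * ⟪p, (i : EuclideanSpace ℝ (Fin n))⟫
              + b * ⟪s, (i : EuclideanSpace ℝ (Fin n))⟫ := by
          rw [inner_add_left, real_inner_smul_left, real_inner_smul_left]
        have h4 : ut i - ‖(i : EuclideanSpace ℝ (Fin n))‖^2 / (2*e)
              + ⟪a • p + b • s, (i : EuclideanSpace ℝ (Fin n))⟫ / e
            = a * (ut i - ‖(i : EuclideanSpace ℝ (Fin n))‖^2 / (2*e)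
                + ⟪p, (i : EuclideanSpace ℝ (Fin n))⟫ / e)
              + b * (ut i - ‖(i : EuclideanSpace ℝ (Fin n))‖^2 / (2*e)
                + ⟪s, (i : EuclideanSpace ℝ (Fin n))⟫ / e) := by
          rw [hin]
          linear_combination (-(ut (i : EuclideanSpace ℝ (Fin n))
            - ‖(i : EuclideanSpace ℝ (Fin n))‖^2 / (2*e))) * hab
        nlinarith [mul_le_mul_of_nonneg_left h2 ha, mul_le_mul_of_nonneg_left h3 hb]
      have hSc : S (a • p + b • s) ≤ a * (S p + (1/e)/2 * ‖p‖^2) + b * (S s + (1/e)/2 * ‖s‖^2)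
          - (1/e)/2 * ‖a • p + b • s‖^2 := by
        rw [hS]
        exact ciSup_le hidx
      have hη4 : a*(η/4) + b*(η/4) = η/4 := by linear_combination (η/4)*hab
      linarith [hSc, hη4]
    -- continuity
    have hwcont : Continuous (fun y : EuclideanSpace ℝ (Fin n) => v y + (1/e)/2 * ‖y‖^2) := by
      rw [← continuousOn_univ]
      exact hwconv.continuousOn isOpen_univ
    have hvcont : Continuous v := by
      have hveq : v = fun x => (v x + (1/e)/2 * ‖x‖^2) - (1/e)/2 * ‖x‖^2 := by
        ext x; ring
      rw [hveq]
      exact hwcont.sub (continuous_const.mul (continuous_norm.pow 2))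
    -- the q-convexity of v on V
    have hqc : RealQConvexOn q (fun x => (v x : EReal)) V := by
      have huscv : UpperSemicontinuousOn (fun x => (v x : EReal)) V := by
        have h := ((continuous_coe_real_ereal.comp hvcont).upperSemicontinuous).upperSemicontinuousOn (s := V)
        exact h
      refine ⟨fun x _ => EReal.coe_ne_top _, huscv, ?_⟩
      intro P hP c r hr hsub l hl x₀ hx₀
      obtain ⟨hx₀b, hx₀P⟩ := hx₀
      have hcbV : closedBall c r ⊆ V := by
        rw [← closure_ball c hr.ne']
        exact hsub
      have hx₀K : x₀ ∈ K := hVK (hcbV hx₀b)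
      obtain ⟨y0, hy0K, hSeq, hmaxpt⟩ := hmaxat x₀
      have hle0 : ut x₀ ≤ ut y0 - ‖x₀ - y0‖^2 / (2*e) := by
        have := hmaxpt x₀ hx₀K
        simpa using this
      have hzσ : ‖x₀ - y0‖ ≤ σ := hclose x₀ hx₀K y0 hy0K hle0
      -- translation invariance
      have htrans : ∀ p ∈ closedBall c r, p - (x₀ - y0) ∈ K := by
        intro p hp
        have hpV : p ∈ V := hcbV hp
        rw [hV, mem_thickening_iff] at hpV
        obtain ⟨k, hkK₀, hdk⟩ := hpV
        have hd1 : dist (p - (x₀ - y0)) p = ‖x₀ - y0‖ := by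
          rw [dist_eq_norm, sub_sub_cancel_left, norm_neg]
        have hd2 : dist (p - (x₀ - y0)) k < ρ0 := by
          calc dist (p - (x₀ - y0)) k ≤ dist (p - (x₀ - y0)) p + dist p k := dist_triangle _ _ _
            _ < ρ0 := by rw [hd1]; linarith
        rw [hK]
        exact thickening_subset_cthickening _ _ (mem_thickening_iff.2 ⟨k, hkK₀, hd2⟩)
      -- the translated affine map
      set z := x₀ - y0 with hzdef
      set l' : EuclideanSpace ℝ (Fin n) →ᵃ[ℝ] ℝ :=
        { toFun := fun y => l (y + z) + (‖z‖^2/(2*e) - η/4)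
          linear := l.linear
          map_vadd' := by
            intro p w
            simp only [vadd_eq_add]
            have h := l.map_vadd (p + z) w
            simp only [vadd_eq_add] at h
            rw [add_assoc, h]
            ring } with hl'
      have hl'app : ∀ y, l' y = l (y + z) + (‖z‖^2/(2*e) - η/4) := fun y => rfl
      -- the translated ball is inside ω
      have hsubω : closure (ball (c - z) r) ⊆ ω := by
        rw [closure_ball _ hr.ne']
        intro p hp
        have h1 : p + z ∈ closedBall c r := by
          rw [mem_closedBall_iff_norm] at hp ⊢
          have hh : p + z - c = p - (c - z) := by abel
          rw [hh]
          exact hp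
        have h2 := htrans (p + z) h1
        rw [add_sub_cancel_right] at h2
        exact hKω h2
      -- the hypothesis of q-convexity of u ⊔ m on the translated ball
      have hhyp : ∀ y ∈ Metric.sphere (c - z) r ∩ ((AffineSubspace.mk' y0 P.direction : AffineSubspace ℝ (EuclideanSpace ℝ (Fin n))) : Set (EuclideanSpace ℝ (Fin n))),
          (fun x => u x ⊔ (m : EReal)) y ≤ (l' y : EReal) := by
        rintro y ⟨hysph, hyP'⟩
        have hyPdir : y - y0 ∈ P.direction := by
          have h' : y ∈ AffineSubspace.mk' y0 P.direction := hyP'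
          rw [AffineSubspace.mem_mk'] at h'
          simpa [vsub_eq_sub] using h'
        have hxsph : y + z ∈ Metric.sphere c r := by
          rw [mem_sphere_iff_norm] at hysph ⊢
          have hh : y + z - c = y - (c - z) := by abel
          rw [hh]
          exact hysph
        have hxP : y + z ∈ P := by
          have hh : y + z = (y - y0) +ᵥ x₀ := by
            simp only [vadd_eq_add, hzdef]
            abel
          rw [hh]
          exact AffineSubspace.vadd_mem_of_mem_direction hyPdir hx₀P
        have hxcb : y + z ∈ closedBall c r := sphere_subset_closedBall hxsph
        have hyK : y ∈ K := by
          have := htrans (y + z) hxcb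
          rwa [add_sub_cancel_right] at this
        have hvl : v (y + z) ≤ l (y + z) := by
          have h0 : (v (y + z) : EReal) ≤ (l (y + z) : EReal) := hl (y + z) ⟨hxsph, hxP⟩
          exact_mod_cast h0
        have hterm : ut y - ‖(y + z) - y‖^2 / (2*e) ≤ S (y + z) := by
          rw [hS]
          exact le_ciSup (hbdd (y + z)) (⟨y, hyK⟩ : K)
        have hxy : (y + z) - y = z := by abel
        rw [hxy] at hterm
        have hvx := hv (y + z)
        have hfinal : ut y ≤ l' y := by
          rw [hl'app]
          linarith
        have hyω : y ∈ ω := hKω hyK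
        show u y ⊔ (m : EReal) ≤ (l' y : EReal)
        rw [← hutcoe y hyω]
        exact_mod_cast hfinal
      -- apply q-convexity of u ⊔ m
      have hP' : Module.finrank ℝ (AffineSubspace.mk' y0 P.direction).direction = q + 1 := by
        rw [AffineSubspace.direction_mk']
        exact hP
      have hy0cb : y0 ∈ closedBall (c - z) r := by
        rw [mem_closedBall_iff_norm]
        have hh : y0 - (c - z) = x₀ - c := by rw [hzdef]; abel
        rw [hh]
        exact mem_closedBall_iff_norm.1 hx₀b
      have hy0P' : y0 ∈ AffineSubspace.mk' y0 P.direction := AffineSubspace.self_mem_mk' _ _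
      have hfin := (hu.sup_const m).2.2 (AffineSubspace.mk' y0 P.direction) hP' (c - z) r hr
        hsubω l' hhyp y0 ⟨hy0cb, hy0P'⟩
      have hy0ω : y0 ∈ ω := hKω hy0K
      have hfin2 : u y0 ⊔ (m : EReal) ≤ (l' y0 : EReal) := hfin
      rw [← hutcoe y0 hy0ω] at hfin2
      have hfin' : ut y0 ≤ l' y0 := by exact_mod_cast hfin2
      rw [hl'app] at hfin'
      have hx₀eq : y0 + z = x₀ := by rw [hzdef]; abel
      rw [hx₀eq] at hfin'
      have hvx₀ : v x₀ ≤ l x₀ := by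
        have h1 := hv x₀
        rw [hSeq] at h1
        linarith
      show (v x₀ : EReal) ≤ (l x₀ : EReal)
      exact_mod_cast hvx₀
    -- final bounds on closure D
    refine ⟨1/e, by positivity, v, hvcont, ?_, ⟨V, hVopen, hK₀V, hqc⟩, ?_⟩
    · intro x _
      exact ⟨univ, isOpen_univ, mem_univ x, subset_rfl, convex_univ, hwconv⟩
    · intro x hx
      have hxK : x ∈ K := hK₀K hx
      have hxω : x ∈ ω := hKω hxK
      constructor
      · have h1 : u x ≤ (ut x : EReal) := by
          rw [hutcoe x hxω]
          exact le_sup_left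
        have h2 : ut x < v x := by
          have := hSge x hxK
          have := hv x
          linarith
        exact lt_of_le_of_lt h1 (by exact_mod_cast h2)
      · obtain ⟨y0, hy0K, hSeq, hmaxpt⟩ := hmaxat x
        have hle0 : ut x ≤ ut y0 - ‖x - y0‖^2 / (2*e) := by
          have := hmaxpt x hxK
          simpa using this
        have hzσ : ‖x - y0‖ ≤ σ := hclose x hxK y0 hy0K hle0
        have hdist : dist y0 x < df := by
          rw [dist_eq_norm, norm_sub_rev]
          linarith
        have hff := hprox y0 hy0K x hxK hdist
        rw [Real.dist_eq] at hff
        have hfb : f y0 < f x + η/2 := by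
          have := abs_lt.1 hff
          linarith [this.2]
        have hgap0 := hgap y0 hy0K
        have hpos : 0 ≤ ‖x - y0‖^2 / (2*e) := by positivity
        have h1 := hv x
        rw [hSeq] at h1
        linarith
end
end
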